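/- Let f be analytic on an open set containing the closed unit disk with |f| = 1 on the unit circle, and suppose f has exactly one distinct zero z₀ in 𝔻, of multiplicity k. Then there exists an injective analytic map φ : 𝔻 → ℂ with φ(z₀) = 0 such that f(z) = φ(z)^k for all z ∈ 𝔻, and the image φ(𝔻) is the open unit disk. -/

import Mathlib

open Set Metric

open Complex in
lemma key_sq (z₀ z : ℂ) :
    normSq (1 - (starRingEnd ℂ) z₀ * z) - normSq (z - z₀)
      = (1 - normSq z) * (1 - normSq z₀) := by
  simp only [normSq_apply, sub_re, sub_im, mul_re, mul_im, one_re, one_im,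
    conj_re, conj_im]
  ring

open Complex in
lemma den_ne (z₀ z : ℂ) (h0 : ‖z₀‖ < 1) (h1 : ‖z‖ ≤ 1) :
    1 - (starRingEnd ℂ) z₀ * z ≠ 0 := by
  intro h
  have : ‖(starRingEnd ℂ) z₀ * z‖ < 1 := by
    rw [norm_mul, RCLike.norm_conj]
    calc ‖z₀‖ * ‖z‖ ≤ ‖z₀‖ * 1 := by
          exact mul_le_mul_of_nonneg_left h1 (norm_nonneg _)
      _ < 1 := by simpa using h0
  have h2 : (starRingEnd ℂ) z₀ * z = 1 := by linear_combination -h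
  rw [h2] at this
  simp at this

open Complex in
lemma blaschke_lt_one (z₀ z : ℂ) (h0 : ‖z₀‖ < 1) (h1 : ‖z‖ < 1) :
    ‖(z - z₀) / (1 - (starRingEnd ℂ) z₀ * z)‖ < 1 := by
  have hd := den_ne z₀ z h0 h1.le
  rw [norm_div, div_lt_one (norm_pos_iff.2 hd)]
  have h1' : normSq z < 1 := by
    have := Complex.sq_norm z
    nlinarith [norm_nonneg z]
  have h0' : normSq z₀ < 1 := by
    have := Complex.sq_norm z₀
    nlinarith [norm_nonneg z₀]
  have key := key_sq z₀ z
  have hlt : normSq (z - z₀) < normSq (1 - (starRingEnd ℂ) z₀ * z) := by nlinarith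
  have := Real.sqrt_lt_sqrt (normSq_nonneg _) hlt
  simpa [Complex.norm_def] using this

open Complex in
lemma blaschke_inj (z₀ : ℂ) (h0 : ‖z₀‖ < 1) :
    Set.InjOn (fun z => (z - z₀) / (1 - (starRingEnd ℂ) z₀ * z)) (ball (0:ℂ) 1) := by
  intro x hx y hy hxy
  rw [mem_ball_zero_iff] at hx hy
  have hdx := den_ne z₀ x h0 hx.le
  have hdy := den_ne z₀ y h0 hy.le
  simp only at hxy
  rw [div_eq_div_iff hdx hdy] at hxy
  have hne : (1 : ℂ) - z₀ * (starRingEnd ℂ) z₀ ≠ 0 := by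
    intro h
    have : ‖z₀ * (starRingEnd ℂ) z₀‖ < 1 := by
      rw [norm_mul, RCLike.norm_conj]
      nlinarith [norm_nonneg z₀]
    have h2 : z₀ * (starRingEnd ℂ) z₀ = 1 := by linear_combination -h
    rw [h2] at this; simp at this
  have : (x - y) * (1 - z₀ * (starRingEnd ℂ) z₀) = 0 := by linear_combination hxy
  rcases mul_eq_zero.1 this with h | h
  · exact sub_eq_zero.1 h
  · exact absurd h hne

open Complex in
lemma blaschke_surj (z₀ w : ℂ) (h0 : ‖z₀‖ < 1) (hw : ‖w‖ < 1) :
    ∃ z, ‖z‖ < 1 ∧ (z - z₀) / (1 - (starRingEnd ℂ) z₀ * z) = w := by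
  have h0' : ‖-z₀‖ < 1 := by simpa using h0
  refine ⟨(w - -z₀) / (1 - (starRingEnd ℂ) (-z₀) * w), blaschke_lt_one (-z₀) w h0' hw, ?_⟩
  have hd : 1 - (starRingEnd ℂ) (-z₀) * w ≠ 0 := den_ne (-z₀) w h0' hw.le
  set z := (w - -z₀) / (1 - (starRingEnd ℂ) (-z₀) * w) with hz
  have hzlt : ‖z‖ < 1 := blaschke_lt_one (-z₀) w h0' hw
  have hdz : 1 - (starRingEnd ℂ) z₀ * z ≠ 0 := den_ne z₀ z h0 hzlt.le
  have hd' : (1:ℂ) + (starRingEnd ℂ) z₀ * w ≠ 0 := by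
    intro h; apply hd; rw [← h]; simp
  rw [div_eq_iff hdz, hz]
  have hz' : z = (w + z₀) / (1 + (starRingEnd ℂ) z₀ * w) := by
    rw [hz]; congr 1; · ring
    · simp
  rw [← hz, hz']
  have hd'' : (1:ℂ) + w * (starRingEnd ℂ) z₀ ≠ 0 := by rwa [mul_comm w]
  field_simp
  ring

open Complex in
lemma circle_norm_eq (z₀ w : ℂ) (hw : ‖w‖ = 1) :
    ‖1 - (starRingEnd ℂ) z₀ * w‖ = ‖w - z₀‖ := by
  have h1 : w * (starRingEnd ℂ) w = 1 := by
    rw [Complex.mul_conj]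
    norm_cast
    rw [← Complex.sq_norm, hw]; norm_num
  have h2 : 1 - (starRingEnd ℂ) z₀ * w = w * (starRingEnd ℂ) (w - z₀) := by
    rw [map_sub, mul_sub, h1]; ring
  rw [h2, norm_mul, RCLike.norm_conj, hw, one_mul]


theorem single_zero_power_model (f g : ℂ → ℂ) (U : Set ℂ) (hU : IsOpen U)
    (hcl : closure (ball (0 : ℂ) 1) ⊆ U) (hf : AnalyticOnNhd ℂ f U)
    (hmod : ∀ z : ℂ, ‖z‖ = 1 → ‖f z‖ = 1)
    (z₀ : ℂ) (hz₀ : z₀ ∈ ball (0 : ℂ) 1) (k : ℕ) (hk : 1 ≤ k)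
    (hg : AnalyticOnNhd ℂ g (ball (0 : ℂ) 1))
    (hgne : ∀ z ∈ ball (0 : ℂ) 1, g z ≠ 0)
    (hfac : ∀ z ∈ ball (0 : ℂ) 1, f z = (z - z₀) ^ k * g z) :
    ∃ φ : ℂ → ℂ, AnalyticOnNhd ℂ φ (ball (0 : ℂ) 1) ∧
      Set.InjOn φ (ball (0 : ℂ) 1) ∧ φ z₀ = 0 ∧
      (∀ z ∈ ball (0 : ℂ) 1, f z = φ z ^ k) ∧
      φ '' ball (0 : ℂ) 1 = ball (0 : ℂ) 1 := by
  have hz₀1 : ‖z₀‖ < 1 := mem_ball_zero_iff.1 hz₀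
  have hcb : closedBall (0:ℂ) 1 ⊆ U := by
    rwa [closure_ball (0:ℂ) one_ne_zero] at hcl
  set a : ℂ := (starRingEnd ℂ) z₀ with ha
  have hden : ∀ z : ℂ, ‖z‖ ≤ 1 → 1 - a * z ≠ 0 := fun z hz => den_ne z₀ z hz₀1 hz
  set h : ℂ → ℂ := fun z => g z * (1 - a * z) ^ k with hh
  have hha : AnalyticOnNhd ℂ h (ball (0:ℂ) 1) :=
    hg.mul ((analyticOnNhd_const.sub (analyticOnNhd_const.mul analyticOnNhd_id)).pow k)
  have hhne : ∀ z ∈ ball (0:ℂ) 1, h z ≠ 0 := fun z hz =>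
    mul_ne_zero (hgne z hz) (pow_ne_zero _ (hden z (mem_ball_zero_iff.1 hz).le))
  -- key: ‖h z‖ = 1 on the ball
  have key : ∀ z ∈ ball (0:ℂ) 1, ‖h z‖ = 1 := by
    intro z hzb
    have hz : ‖z‖ < 1 := mem_ball_zero_iff.1 hzb
    have main : ∀ ε : ℝ, 0 < ε → ε < 1 → ‖h z‖ ≤ 1 + ε ∧ 1 - ε ≤ ‖h z‖ := by
      intro ε hε hε1
      set W : Set ℂ := U ∩ {w | w ≠ z₀} with hW
      have hWopen : IsOpen W := hU.inter isOpen_compl_singleton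
      set Φ : ℂ → ℝ := fun w => ‖f w‖ * (‖1 - a * w‖ / ‖w - z₀‖) ^ k with hΦ
      have hΦcont : ContinuousOn Φ W := by
        apply ContinuousOn.mul
        · exact (hf.continuousOn.mono inter_subset_left).norm
        · apply ContinuousOn.pow
          apply ContinuousOn.div
          · exact (continuous_const.sub (continuous_const.mul continuous_id)).norm.continuousOn
          · exact (continuous_id.sub continuous_const).norm.continuousOn
          · exact fun w hw => norm_ne_zero_iff.2 (sub_ne_zero.2 hw.2)
      set V := W ∩ Φ ⁻¹' (Ioo (1-ε) (1+ε)) with hV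
      have hVopen : IsOpen V := hΦcont.isOpen_inter_preimage hWopen isOpen_Ioo
      have hsub : sphere (0:ℂ) 1 ⊆ V := by
        intro w hw
        have hw1 : ‖w‖ = 1 := mem_sphere_zero_iff_norm.1 hw
        have hwU : w ∈ U := hcb (by simp [mem_closedBall_zero_iff, hw1])
        have hwz : w ≠ z₀ := by intro he; rw [he] at hw1; exact absurd hw1 (ne_of_lt hz₀1)
        refine ⟨⟨hwU, hwz⟩, ?_⟩
        have hΦw : Φ w = 1 := by
          rw [hΦ]
          simp only
          rw [hmod w hw1, circle_norm_eq z₀ w hw1,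
            div_self (norm_ne_zero_iff.2 (sub_ne_zero.2 hwz)), one_pow, mul_one]
        exact ⟨by rw [hΦw]; linarith, by rw [hΦw]; linarith⟩
      obtain ⟨δ, hδ, hδsub⟩ :=
        (isCompact_sphere (0:ℂ) 1).exists_thickening_subset_open hVopen hsub
      obtain ⟨r, hr1, hr2⟩ :=
        exists_between (show max (max ‖z‖ ‖z₀‖) (1 - δ) < 1 by
          simp only [max_lt_iff]; exact ⟨⟨hz, hz₀1⟩, by linarith⟩)
      have hzr : ‖z‖ < r := lt_of_le_of_lt (le_trans (le_max_left _ _) (le_max_left _ _)) hr1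
      have hz₀r : ‖z₀‖ < r := lt_of_le_of_lt (le_trans (le_max_right _ _) (le_max_left _ _)) hr1
      have hδr : 1 - δ < r := lt_of_le_of_lt (le_max_right _ _) hr1
      have hr0 : 0 < r := lt_of_le_of_lt (norm_nonneg z₀) hz₀r
      -- frontier facts
      have hfront : ∀ w ∈ sphere (0:ℂ) r, Φ w ∈ Ioo (1-ε) (1+ε) ∧ ‖h w‖ = Φ w := by
        intro w hw
        have hwr : ‖w‖ = r := mem_sphere_zero_iff_norm.1 hw
        have hwb : w ∈ ball (0:ℂ) 1 := mem_ball_zero_iff.2 (hwr ▸ hr2)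
        have hwz : w ≠ z₀ := by
          intro he; rw [he] at hwr; rw [hwr] at hz₀r; exact absurd hz₀r (lt_irrefl r)
        have hwV : w ∈ V := by
          apply hδsub
          rw [mem_thickening_iff]
          refine ⟨(r:ℂ)⁻¹ * w, ?_, ?_⟩
          · rw [mem_sphere_zero_iff_norm, norm_mul, norm_inv, Complex.norm_real,
              Real.norm_eq_abs, abs_of_pos hr0, hwr]
            field_simp
          · have : w - (r:ℂ)⁻¹ * w = (1 - (r:ℂ)⁻¹) * w := by ring
            rw [dist_eq_norm, this, norm_mul, hwr]
            have h1r : (1:ℝ) - r⁻¹ < 0 := by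
              rw [sub_neg]
              exact (one_lt_inv_iff₀).2 ⟨hr0, hr2⟩
            have : ‖(1:ℂ) - (r:ℂ)⁻¹‖ = r⁻¹ - 1 := by
              have : ((1:ℝ) - r⁻¹ : ℝ) = ((1 - (r:ℂ)⁻¹ : ℂ) : ℂ).re := by
                simp
              rw [show (1 - (r:ℂ)⁻¹ : ℂ) = ((1 - r⁻¹ : ℝ) : ℂ) by push_cast; ring,
                Complex.norm_real, Real.norm_eq_abs, abs_of_neg h1r]
              ring
            rw [this]
            have : (r⁻¹ - 1) * r = 1 - r := by field_simp
            rw [this]; linarith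
        have hΦIoo : Φ w ∈ Ioo (1-ε) (1+ε) := hwV.2
        refine ⟨hΦIoo, ?_⟩
        have hnz : ‖w - z₀‖ ≠ 0 := norm_ne_zero_iff.2 (sub_ne_zero.2 hwz)
        have hfw : ‖f w‖ = ‖w - z₀‖ ^ k * ‖g w‖ := by
          rw [hfac w hwb, norm_mul, norm_pow]
        rw [hΦ, hh]
        simp only
        rw [hfw, norm_mul, norm_pow, div_pow]
        rw [mul_comm (‖w - z₀‖ ^ k) (‖g w‖), mul_assoc,
          mul_div_cancel₀ _ (pow_ne_zero _ hnz)]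
      have hd1 : DiffContOnCl ℂ h (ball (0:ℂ) r) := by
        constructor
        · exact (hha.differentiableOn).mono (ball_subset_ball hr2.le)
        · refine (hha.continuousOn).mono ?_
          rw [closure_ball (0:ℂ) (ne_of_gt hr0)]
          exact closedBall_subset_ball hr2
      have hzcl : z ∈ closure (ball (0:ℂ) r) := subset_closure (mem_ball_zero_iff.2 hzr)
      constructor
      · apply Complex.norm_le_of_forall_mem_frontier_norm_le isBounded_ball hd1 _ hzcl
        intro w hw
        rw [frontier_ball (0:ℂ) (ne_of_gt hr0)] at hw
        obtain ⟨hio, heq⟩ := hfront w hw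
        rw [heq]; exact hio.2.le
      · have hinv : DiffContOnCl ℂ (fun w => (h w)⁻¹) (ball (0:ℂ) r) := by
          have hia : AnalyticOnNhd ℂ (fun w => (h w)⁻¹) (ball (0:ℂ) 1) := hha.inv hhne
          constructor
          · exact (hia.differentiableOn).mono (ball_subset_ball hr2.le)
          · refine (hia.continuousOn).mono ?_
            rw [closure_ball (0:ℂ) (ne_of_gt hr0)]
            exact closedBall_subset_ball hr2
        have hb : ‖(h z)⁻¹‖ ≤ (1-ε)⁻¹ := by
          apply Complex.norm_le_of_forall_mem_frontier_norm_le isBounded_ball hinv _ hzcl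
          intro w hw
          rw [frontier_ball (0:ℂ) (ne_of_gt hr0)] at hw
          obtain ⟨hio, heq⟩ := hfront w hw
          rw [norm_inv, heq]
          exact inv_anti₀ (by linarith) hio.1.le
        rw [norm_inv] at hb
        have hpos : 0 < ‖h z‖ := norm_pos_iff.2 (hhne z hzb)
        have h1ε : (0:ℝ) < 1 - ε := by linarith
        rw [inv_le_inv₀ hpos h1ε] at hb
        exact hb
    apply le_antisymm
    · by_contra hgt
      push_neg at hgt
      have hε : (0:ℝ) < min ((‖h z‖ - 1)/2) (1/2) := by
        apply lt_min <;> linarith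
      have hε1 : min ((‖h z‖ - 1)/2) (1/2) < 1 :=
        lt_of_le_of_lt (min_le_right _ _) (by norm_num)
      have := (main _ hε hε1).1
      have hle := min_le_left ((‖h z‖ - 1)/2) (1/2)
      linarith
    · by_contra hlt
      push_neg at hlt
      have h0 : (0:ℝ) ≤ ‖h z‖ := norm_nonneg _
      have hε : (0:ℝ) < (1 - ‖h z‖)/2 := by linarith
      have hε1 : (1 - ‖h z‖)/2 < 1 := by linarith
      have := (main _ hε hε1).2
      linarith
  -- h is constant
  have hconst : ∀ w ∈ ball (0:ℂ) 1, h w = h z₀ := by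
    intro w hw
    exact Complex.eqOn_of_isPreconnected_of_isMaxOn_norm
      (convex_ball (0:ℂ) 1).isPreconnected isOpen_ball hha.differentiableOn hz₀
      (fun x hx => by
        simp only [Function.comp_apply, mem_setOf_eq]
        rw [key x hx, key z₀ hz₀]) hw
  set c : ℂ := h z₀ with hc
  have hc1 : ‖c‖ = 1 := key z₀ hz₀
  have hc0 : c ≠ 0 := by intro he; rw [he] at hc1; simp at hc1
  obtain ⟨l, hl⟩ := IsAlgClosed.exists_pow_nat_eq c (show 0 < k by omega)
  have hl1 : ‖l‖ = 1 := by
    have hlk : ‖l‖ ^ k = 1 := by rw [← norm_pow, hl, hc1]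
    rcases lt_trichotomy ‖l‖ 1 with hlt | heq | hgt
    · have := pow_lt_pow_left₀ hlt (norm_nonneg l) (by omega : k ≠ 0)
      rw [hlk, one_pow] at this; linarith
    · exact heq
    · have := pow_lt_pow_left₀ hgt (by norm_num : (0:ℝ) ≤ 1) (by omega : k ≠ 0)
      rw [hlk, one_pow] at this; linarith
  have hl0 : l ≠ 0 := by intro he; rw [he] at hl1; simp at hl1
  refine ⟨fun z => l * ((z - z₀) / (1 - a * z)), ?_, ?_, ?_, ?_, ?_⟩
  · intro x hx
    exact analyticAt_const.mul
      (((analyticAt_id).sub analyticAt_const).div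
        (analyticAt_const.sub (analyticAt_const.mul analyticAt_id))
        (hden x (mem_ball_zero_iff.1 hx).le))
  · intro x hx y hy hxy
    exact blaschke_inj z₀ hz₀1 hx hy (mul_left_cancel₀ hl0 hxy)
  · simp
  · intro z hzb
    have hz : ‖z‖ < 1 := mem_ball_zero_iff.1 hzb
    have hdz := hden z hz.le
    have hgz : g z * (1 - a * z) ^ k = c := hconst z hzb
    rw [hfac z hzb, mul_pow, hl, mul_comm (c) _, div_pow, div_mul_eq_mul_div,
      eq_div_iff (pow_ne_zero _ hdz)]
    linear_combination (z - z₀)^k * hgz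
  · ext w
    constructor
    · rintro ⟨z, hzb, rfl⟩
      have hz : ‖z‖ < 1 := mem_ball_zero_iff.1 hzb
      rw [mem_ball_zero_iff, norm_mul, hl1, one_mul]
      exact blaschke_lt_one z₀ z hz₀1 hz
    · intro hw
      have hw1 : ‖w‖ < 1 := mem_ball_zero_iff.1 hw
      have hwl : ‖w / l‖ < 1 := by rw [norm_div, hl1, div_one]; exact hw1
      obtain ⟨z, hz, hzeq⟩ := blaschke_surj z₀ (w / l) hz₀1 hwl
      refine ⟨z, mem_ball_zero_iff.2 hz, ?_⟩
      simp only [ha]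
      rw [hzeq]
      field_simp
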